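/- arXiv:1101.1108 — 2 statements merged into one kernel-verified Lean document; each statement's English description precedes it below -/
import Mathlib

section
/- For all k ≥ 2 and n ≥ 1, the number of permutations w ∈ S_{kn+k-1} whose ascent/descent vector is a (k-1)-ballot sequence equals A(n, kn+k-1)/(n+1), where A(m,N) is the number of permutations of [N] with m descents. -/
open scoped Classical

/-- Number of descents of `w` occurring among the first `ℓ` positions
(0-indexed: position `i` is a descent if `w i > w (i+1)`). -/
noncomputable def descentsIn {N : ℕ} (w : Equiv.Perm (Fin N)) (ℓ : ℕ) : ℕ :=
  ((Finset.range ℓ).filter (fun i =>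
    ∃ h : i + 1 < N, w ⟨i + 1, h⟩ < w ⟨i, Nat.lt_of_succ_lt h⟩)).card

/-- Total number of descents of a permutation of `[N]`. -/
noncomputable def descents {N : ℕ} (w : Equiv.Perm (Fin N)) : ℕ :=
  descentsIn w (N - 1)

/-- The Eulerian number `A(m, N)`: the number of permutations of `[N]`
with exactly `m` descents. -/
noncomputable def eulerian (m N : ℕ) : ℕ :=
  (Finset.univ.filter (fun w : Equiv.Perm (Fin N) => descents w = m)).card


/-- `w ∈ S_{kn+k-1}` is a `(k-1)`-Dyck permutation: its ascent/descent vector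
is a `(k-1)`-ballot sequence, i.e. every initial segment has at least `k-1`
times as many ascents (0's) as descents (1's); such a permutation has exactly
`n` descents (its lattice path ends at `((k-1)n, n)`). -/
noncomputable def IsKDyckPerm (k n : ℕ) (w : Equiv.Perm (Fin (k * n + k - 1))) : Prop :=
  descents w = n ∧
    ∀ ℓ ≤ k * n + k - 2, (k - 1) * descentsIn w ℓ ≤ ℓ - descentsIn w ℓ

set_option linter.unusedSectionVars false
open scoped Classical


namespace KDyck

variable {M : ℕ}

/-- order key: `0` is the top value; `ordv a = (a-1).val`. -/
def ordv (a : ZMod M) : ℕ := (a - 1).val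

/-- descent at position `x` for value-shift `j`. -/
def des (g : Equiv.Perm (ZMod M)) (j x : ZMod M) : Prop :=
  ordv (g (x + 1) + j) < ordv (g x + j)

noncomputable def wt (k : ℕ) (g : Equiv.Perm (ZMod M)) (j x : ZMod M) : ℤ :=
  if des g j x then 1 - k else 1

noncomputable def hh (k : ℕ) (g : Equiv.Perm (ZMod M)) (j : ZMod M) (t : ℕ) : ℤ :=
  ∑ i ∈ Finset.range t, wt k g j (i : ZMod M)

noncomputable def HH (k : ℕ) (g : Equiv.Perm (ZMod M)) (j : ZMod M) (x : ZMod M) : ℤ :=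
  hh k g j x.val

section basic
variable [NeZero M]

lemma val_cast_val (a : ZMod M) : ((a.val : ℕ) : ZMod M) = a :=
  ZMod.natCast_rightInverse a

lemma two_le_of (hM : 2 ≤ M) : (1 : ZMod M) ≠ 0 := by
  intro h
  have h2 : ((1:ℕ) : ZMod M).val = 1 % M := ZMod.val_natCast M 1
  rw [Nat.cast_one, h, ZMod.val_zero, Nat.mod_eq_of_lt (by omega)] at h2
  omega

lemma sub_one_val {a : ZMod M} (ha : a ≠ 0) : (a - 1).val = a.val - 1 := by
  have h1 : 1 ≤ a.val := by
    rcases Nat.eq_zero_or_pos a.val with h | h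
    · exact absurd ((ZMod.val_eq_zero a).1 h) ha
    · exact h
  have : a - 1 = ((a.val - 1 : ℕ) : ZMod M) := by
    have := val_cast_val a
    push_cast [Nat.cast_sub h1]
    rw [this]
  rw [this, ZMod.val_cast_of_lt]
  have := ZMod.val_lt a; omega

lemma neg_one_val (hM : 2 ≤ M) : ((-1 : ZMod M)).val = M - 1 := by
  have : (-1 : ZMod M) = ((M - 1 : ℕ) : ZMod M) := by
    push_cast [Nat.cast_sub (by omega : 1 ≤ M)]
    simp [ZMod.natCast_self]
  rw [this, ZMod.val_cast_of_lt (by omega)]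

lemma zero_sub_one_val (hM : 2 ≤ M) : ((0 - 1 : ZMod M)).val = M - 1 := by
  rw [zero_sub]; exact neg_one_val hM

lemma ordv_zero (hM : 2 ≤ M) : ordv (0 : ZMod M) = M - 1 := by
  unfold ordv; exact zero_sub_one_val hM

lemma ordv_lt_of_ne {a : ZMod M} (hM : 2 ≤ M) (ha : a ≠ 0) : ordv a < M - 1 := by
  unfold ordv
  rw [sub_one_val ha]
  have hlt := ZMod.val_lt a
  have hne : a.val ≠ 0 := fun h => ha ((ZMod.val_eq_zero a).1 h)
  -- need a.val - 1 < M - 1, i.e. a.val < M and a.val ≥ 1; but if a.val = M - 1 then a.val - 1 = M-2 < M-1 ok. always ok since a.val ≤ M-1 and a.val ≥ 1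
  omega

-- `a ≠ -1 → a.val < M - 1`
lemma val_lt_last {a : ZMod M} (hM : 2 ≤ M) (ha : a ≠ -1) : a.val < M - 1 := by
  have hlt := ZMod.val_lt a
  rcases Nat.lt_or_ge a.val (M - 1) with h | h
  · exact h
  · exfalso
    apply ha
    have hv : a.val = M - 1 := by omega
    have h1 : a = ((M-1 : ℕ) : ZMod M) := by rw [← hv, val_cast_val a]
    rw [h1]
    push_cast [Nat.cast_sub (by omega : 1 ≤ M)]
    simp [ZMod.natCast_self]

-- comparisons shift correctly: the three cases
lemma ordv_lt_ordv_succ {a b : ZMod M} (hM : 2 ≤ M) (ha : a ≠ 0) (hb : b ≠ 0) :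
    (ordv b < ordv a) ↔ ((b + 1 - 1).val < (a + 1 - 1).val) := by
  simp only [add_sub_cancel_right]
  unfold ordv
  rw [sub_one_val ha, sub_one_val hb]
  have ha1 : 1 ≤ a.val := by
    have := (ZMod.val_eq_zero a).not.2 ha; omega
  have hb1 : 1 ≤ b.val := by
    have := (ZMod.val_eq_zero b).not.2 hb; omega
  omega

/-- Key dichotomy: how `des` changes from shift `j` to `j+1`. -/
lemma des_succ_of_ne (g : Equiv.Perm (ZMod M)) (j x : ZMod M) (hM : 2 ≤ M)
    (hA : g x + j ≠ 0) (hB : g (x + 1) + j ≠ 0) :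
    des g (j + 1) x ↔ des g j x := by
  unfold des
  have e1 : g x + (j + 1) = (g x + j) + 1 := by ring
  have e2 : g (x + 1) + (j + 1) = (g (x + 1) + j) + 1 := by ring
  rw [e1, e2]
  unfold ordv
  exact (ordv_lt_ordv_succ hM hA hB).symm

lemma des_of_A_eq (g : Equiv.Perm (ZMod M)) (j x : ZMod M) (hM : 2 ≤ M)
    (hA : g x + j = 0) (hB : g (x + 1) + j ≠ 0) : des g j x := by
  unfold des
  rw [hA, ordv_zero hM]
  exact ordv_lt_of_ne hM hB

lemma not_des_succ_of_A_eq (g : Equiv.Perm (ZMod M)) (j x : ZMod M) (hM : 2 ≤ M)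
    (hA : g x + j = 0) (hB : g (x + 1) + j ≠ 0) : ¬ des g (j + 1) x := by
  unfold des
  have e1 : g x + (j + 1) = 1 := by rw [show g x + (j+1) = (g x + j) + 1 by ring, hA, zero_add]
  have e2 : g (x + 1) + (j + 1) = (g (x + 1) + j) + 1 := by ring
  rw [e1, e2]
  unfold ordv
  simp only [sub_self, ZMod.val_zero, add_sub_cancel_right]
  omega

lemma not_des_of_B_eq (g : Equiv.Perm (ZMod M)) (j x : ZMod M) (hM : 2 ≤ M)
    (hB : g (x + 1) + j = 0) : ¬ des g j x := by
  unfold des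
  rw [hB, ordv_zero hM]
  intro h
  unfold ordv at h
  have := ZMod.val_lt (g x + j - 1)
  omega

lemma des_succ_of_B_eq (g : Equiv.Perm (ZMod M)) (j x : ZMod M) (hM : 2 ≤ M)
    (hA : g x + j ≠ 0) (hB : g (x + 1) + j = 0) : des g (j + 1) x := by
  unfold des
  have e2 : g (x + 1) + (j + 1) = 1 := by rw [show g (x+1) + (j+1) = (g (x+1) + j) + 1 by ring, hB, zero_add]
  have e1 : g x + (j + 1) = (g x + j) + 1 := by ring
  rw [e1, e2]
  unfold ordv
  simp only [sub_self, ZMod.val_zero]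
  have h0 : (g x + j) + 1 - 1 = g x + j := by ring
  rw [h0]
  have := (ZMod.val_eq_zero (g x + j)).not.2 hA
  omega

/-- entries at adjacent positions are distinct as shifted values -/
lemma AB_ne (g : Equiv.Perm (ZMod M)) (j x : ZMod M) (hM : 2 ≤ M) :
    g x + j ≠ g (x + 1) + j := by
  intro h
  have : g x = g (x + 1) := by
    have := add_right_cancel h; exact this
  have hx : x = x + 1 := g.injective this
  have h1 : (1 : ZMod M) = 0 := by
    have := congrArg (fun y => y - x) hx
    simpa using this.symm
  exact two_le_of hM h1

lemma eq_symm_iff (g : Equiv.Perm (ZMod M)) (j x : ZMod M) :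
    x = g.symm (-j) ↔ g x + j = 0 := by
  rw [← g.apply_eq_iff_eq_symm_apply]
  constructor
  · intro h; rw [h]; ring
  · intro h; have : g x = -j := by linear_combination h
    exact this

/-- L2: weight transition -/
lemma wt_succ (g : Equiv.Perm (ZMod M)) (j x : ZMod M) (hM : 2 ≤ M) (hk : 2 ≤ k) :
    wt k g (j + 1) x = wt k g j x + (if x = g.symm (-j) then (k:ℤ) else 0)
      - (if x + 1 = g.symm (-j) then (k:ℤ) else 0) := by
  by_cases hA : g x + j = 0
  · have hB : g (x + 1) + j ≠ 0 := by rw [← hA]; exact (AB_ne g j x hM).symm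
    have h1 : x = g.symm (-j) := (eq_symm_iff g j x).2 hA
    have h2 : ¬ (x + 1 = g.symm (-j)) := fun h => hB ((eq_symm_iff g j (x+1)).1 h)
    rw [if_pos h1, if_neg h2]
    unfold wt
    rw [if_pos (des_of_A_eq g j x hM hA hB), if_neg (not_des_succ_of_A_eq g j x hM hA hB)]
    ring
  · by_cases hB : g (x + 1) + j = 0
    · have h1 : ¬ (x = g.symm (-j)) := fun h => hA ((eq_symm_iff g j x).1 h)
      have h2 : x + 1 = g.symm (-j) := (eq_symm_iff g j (x+1)).2 hB
      rw [if_neg h1, if_pos h2]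
      unfold wt
      rw [if_neg (not_des_of_B_eq g j x hM hB), if_pos (des_succ_of_B_eq g j x hM hA hB)]
      ring
    · have h1 : ¬ (x = g.symm (-j)) := fun h => hA ((eq_symm_iff g j x).1 h)
      have h2 : ¬ (x + 1 = g.symm (-j)) := fun h => hB ((eq_symm_iff g j (x+1)).1 h)
      rw [if_neg h1, if_neg h2]
      unfold wt
      rw [if_congr (des_succ_of_ne g j x hM hA hB) rfl rfl]
      ring

/-- counting: sum of an indicator of a single residue over an initial segment -/
lemma sum_ind (c : ZMod M) (t : ℕ) (ht : t ≤ M) (v : ℤ) :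
    (∑ i ∈ Finset.range t, if (i : ZMod M) = c then v else 0)
      = if c.val < t then v else 0 := by
  rw [Finset.sum_congr rfl (fun i hi => ?_), Finset.sum_ite_eq' (Finset.range t) c.val (fun _ => v)]
  · simp [Finset.mem_range]
  · have hi' : i < M := lt_of_lt_of_le (Finset.mem_range.1 hi) ht
    congr 1
    apply propext
    constructor
    · intro h; rw [← h, ZMod.val_cast_of_lt hi']
    · intro h; rw [h, val_cast_val]

/-- L3: h transition -/
lemma hh_succ (g : Equiv.Perm (ZMod M)) (j : ZMod M) (t : ℕ) (ht : t ≤ M)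
    (hM : 2 ≤ M) (hk : 2 ≤ k) :
    hh k g (j + 1) t = hh k g j t
      + (if (g.symm (-j)).val < t then (k:ℤ) else 0)
      - (if (g.symm (-j) - 1).val < t then (k:ℤ) else 0) := by
  unfold hh
  have : ∀ i : ℕ, wt k g (j+1) (i : ZMod M)
      = wt k g j (i : ZMod M) + (if (i : ZMod M) = g.symm (-j) then (k:ℤ) else 0)
        - (if (i : ZMod M) = g.symm (-j) - 1 then (k:ℤ) else 0) := by
    intro i
    rw [wt_succ g j _ hM hk]
    congr 2
    apply propext
    constructor
    · intro h; rw [← h]; ring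
    · intro h; rw [h]; ring
  rw [Finset.sum_congr rfl (fun i _ => this i)]
  rw [Finset.sum_sub_distrib, Finset.sum_add_distrib, sum_ind _ t ht, sum_ind _ t ht]

lemma hh_succ_t (g : Equiv.Perm (ZMod M)) (j : ZMod M) (t : ℕ) :
    hh k g j (t + 1) = hh k g j t + wt k g j (t : ZMod M) :=
  Finset.sum_range_succ _ _

lemma hh_M_succ (g : Equiv.Perm (ZMod M)) (j : ZMod M) (hM : 2 ≤ M) (hk : 2 ≤ k) :
    hh k g (j + 1) M = hh k g j M := by
  rw [hh_succ g j M le_rfl hM hk, if_pos (ZMod.val_lt _), if_pos (ZMod.val_lt _)]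
  ring

lemma hh_M_all (g : Equiv.Perm (ZMod M)) (j : ZMod M) (hM : 2 ≤ M) (hk : 2 ≤ k) :
    hh k g j M = hh k g 0 M := by
  have key : ∀ s : ℕ, hh k g (s : ZMod M) M = hh k g 0 M := by
    intro s
    induction s with
    | zero => simp
    | succ s ih => rw [Nat.cast_succ, hh_M_succ g _ hM hk, ih]
  have := key j.val
  rwa [val_cast_val] at this

lemma hh_add (g : Equiv.Perm (ZMod M)) (j : ZMod M) (a b : ℕ) :
    hh k g j (a + b) = hh k g j a + ∑ i ∈ Finset.range b, wt k g j ((a + i : ℕ) : ZMod M) := by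
  induction b with
  | zero => simp [hh]
  | succ b ih =>
      rw [← Nat.add_assoc, hh, Finset.sum_range_succ, ← hh, ih, Finset.sum_range_succ]
      ring

lemma hh_period (g : Equiv.Perm (ZMod M)) (j : ZMod M) (t : ℕ) :
    hh k g j (t + M) = hh k g j t + hh k g j M := by
  induction t with
  | zero => simp [hh]
  | succ t ih =>
      have e : t + 1 + M = (t + M) + 1 := by omega
      rw [e, hh_succ_t, ih, hh_succ_t]
      have : ((t + M : ℕ) : ZMod M) = (t : ZMod M) := by
        push_cast [ZMod.natCast_self]; ring
      rw [this]; ring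

lemma hh_mod (g : Equiv.Perm (ZMod M)) (j : ZMod M) (hS : hh k g j M = 0) (t : ℕ) :
    hh k g j t = hh k g j (t % M) := by
  have key : ∀ q s : ℕ, hh k g j (s + M * q) = hh k g j s := by
    intro q
    induction q with
    | zero => simp
    | succ q ih =>
        intro s
        have e : s + M * (q + 1) = (s + M * q) + M := by ring
        rw [e, hh_period, hS, add_zero, ih]
  conv_lhs => rw [← Nat.mod_add_div t M, key]

lemma HH_succ (g : Equiv.Perm (ZMod M)) (j x : ZMod M) (hM : 2 ≤ M) (hk : 2 ≤ k) :
    HH k g (j + 1) x = HH k g j x + (if g.symm (-j) = 0 then (k:ℤ) else 0)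
      - (if x = g.symm (-j) then (k:ℤ) else 0) := by
  unfold HH
  rw [hh_succ g j x.val (le_of_lt (ZMod.val_lt x)) hM hk]
  set r := g.symm (-j) with hr
  by_cases h0 : r = 0
  · rw [if_pos h0, h0]
    rw [show ((0:ZMod M) - 1) = -1 by ring, neg_one_val hM, ZMod.val_zero]
    have hxlt := ZMod.val_lt x
    by_cases hx : x = 0
    · rw [if_pos hx, hx, ZMod.val_zero]
      try norm_num
    · rw [if_neg hx]
      have : 0 < x.val := by
        have := (ZMod.val_eq_zero x).not.2 hx; omega
      rw [if_pos this, if_neg (by omega)]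
      try ring
  · rw [if_neg h0, sub_one_val h0]
    have hr1 : 1 ≤ r.val := by
      have := (ZMod.val_eq_zero r).not.2 h0; omega
    by_cases hx : x = r
    · rw [if_pos hx, hx, if_neg (by omega), if_pos (by omega)]
      try ring
    · rw [if_neg hx]
      have hne : x.val ≠ r.val := by
        intro h
        apply hx
        rw [← val_cast_val x, h, val_cast_val]
      rcases Nat.lt_or_ge x.val r.val with h | h
      · rw [if_neg (by omega), if_neg (by omega)]; try ring
      · rw [if_pos (by omega), if_pos (by omega)]; try ring

lemma des_at_r (g : Equiv.Perm (ZMod M)) (j : ZMod M) (hM : 2 ≤ M) :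
    des g j (g.symm (-j)) := by
  set r := g.symm (-j)
  have hA : g r + j = 0 := by
    have : g r = -j := g.apply_symm_apply _
    rw [this]; ring
  have hB : g (r + 1) + j ≠ 0 := by rw [← hA]; exact (AB_ne g j r hM).symm
  exact des_of_A_eq g j r hM hA hB

lemma wt_at_r (g : Equiv.Perm (ZMod M)) (j : ZMod M) (hM : 2 ≤ M) :
    wt k g j (g.symm (-j)) = 1 - k := by
  unfold wt
  rw [if_pos (des_at_r g j hM)]

lemma Hrel (g : Equiv.Perm (ZMod M)) (j : ZMod M) (hM : 2 ≤ M) (hk : 2 ≤ k)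
    (hS : hh k g j M = 0) :
    HH k g j (g.symm (-j)) = HH k g j (g.symm (-j) + 1) + ((k:ℤ) - 1) := by
  set r := g.symm (-j) with hr
  have hvlt := ZMod.val_lt r
  rcases Nat.lt_or_ge r.val (M - 1) with hv | hv
  · have hval : (r + 1).val = r.val + 1 := by
      have : r + 1 = ((r.val + 1 : ℕ) : ZMod M) := by
        push_cast [val_cast_val]; ring
      rw [this, ZMod.val_cast_of_lt (by omega)]
    unfold HH
    rw [hval, hh_succ_t, val_cast_val]
    have hw : wt k g j (g.symm (-j)) = 1 - (k:ℤ) := wt_at_r g j hM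
    rw [hr, hw]
    ring
  · have hveq : r.val = M - 1 := by omega
    have hr1 : r + 1 = 0 := by
      have : r = ((M - 1 : ℕ) : ZMod M) := by rw [← hveq, val_cast_val]
      rw [this]
      push_cast [Nat.cast_sub (by omega : 1 ≤ M)]
      simp [ZMod.natCast_self]
    unfold HH
    rw [hr1, ZMod.val_zero]
    have h2 : hh k g j ((M-1)+1) = hh k g j (M - 1) + wt k g j (((M-1:ℕ)) : ZMod M) :=
      hh_succ_t g j (M-1)
    rw [show (M-1)+1 = M by omega] at h2
    rw [hS] at h2
    have hcast : (((M-1:ℕ)) : ZMod M) = r := by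
      rw [show r = ((r.val : ℕ) : ZMod M) from (val_cast_val r).symm, hveq]
    rw [hcast] at h2
    have hw2 : wt k g j r = 1 - (k:ℤ) := wt_at_r g j hM
    rw [hw2] at h2
    rw [hveq]
    simp [hh] at h2 ⊢
    linarith

noncomputable def mm (k : ℕ) (g : Equiv.Perm (ZMod M)) (j : ZMod M) : ℤ :=
  (Finset.univ.image (HH k g j)).min'
    (Finset.image_nonempty.2 Finset.univ_nonempty)

def Good (k : ℕ) (g : Equiv.Perm (ZMod M)) (j : ZMod M) : Prop :=
  ∀ x, HH k g j (g.symm (-j) + 1) ≤ HH k g j x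

lemma mm_le (g : Equiv.Perm (ZMod M)) (j x : ZMod M) : mm k g j ≤ HH k g j x :=
  Finset.min'_le _ _ (Finset.mem_image_of_mem _ (Finset.mem_univ x))

lemma exists_mm (g : Equiv.Perm (ZMod M)) (j : ZMod M) : ∃ x, HH k g j x = mm k g j := by
  have := Finset.min'_mem (Finset.univ.image (HH k g j))
    (Finset.image_nonempty.2 Finset.univ_nonempty)
  rw [Finset.mem_image] at this
  obtain ⟨x, _, hx⟩ := this
  exact ⟨x, hx⟩

lemma good_iff (g : Equiv.Perm (ZMod M)) (j : ZMod M) :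
    Good k g j ↔ HH k g j (g.symm (-j) + 1) = mm k g j := by
  constructor
  · intro hG
    refine le_antisymm ?_ (mm_le g j _)
    obtain ⟨x₀, hx₀⟩ := exists_mm (k := k) g j
    rw [← hx₀]; exact hG x₀
  · intro h x
    rw [h]; exact mm_le g j x

lemma mm_succ (g : Equiv.Perm (ZMod M)) (j : ZMod M) (hM : 2 ≤ M) (hk : 2 ≤ k)
    (hS : hh k g j M = 0) :
    mm k g (j + 1) = mm k g j + (if g.symm (-j) = 0 then (k:ℤ) else 0)
      - (if Good k g j then 1 else 0) := by
  set r := g.symm (-j) with hr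
  set c : ℤ := if r = 0 then (k:ℤ) else 0 with hc
  set T : ℤ := mm k g j + c - (if Good k g j then 1 else 0) with hT
  have hHr : HH k g j r = HH k g j (r + 1) + ((k:ℤ) - 1) := Hrel g j hM hk hS
  have htrans : ∀ x, HH k g (j+1) x = HH k g j x + c - (if x = r then (k:ℤ) else 0) :=
    fun x => HH_succ g j x hM hk
  have hub : ∀ x, T ≤ HH k g (j+1) x := by
    intro x
    rw [htrans x]
    by_cases hx : x = r
    · rw [if_pos hx, hx, hHr]
      by_cases hG : Good k g j
      · have this2 : HH k g j (r + 1) = mm k g j := (good_iff g j).1 hG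
        rw [hT, if_pos hG]
        linarith [this2]
      · obtain ⟨x₀, hx₀⟩ := exists_mm (k := k) g j
        have h1 : ¬ (HH k g j (r + 1) ≤ HH k g j x₀) := by
          intro hle
          apply hG
          intro y
          calc HH k g j (g.symm (-j) + 1) ≤ HH k g j x₀ := by rw [← hr]; exact hle
            _ = mm k g j := hx₀
            _ ≤ HH k g j y := mm_le g j y
        push_neg at h1
        rw [hx₀] at h1
        rw [hT, if_neg hG]
        linarith
    · rw [if_neg hx]
      have h1 := mm_le (k := k) g j x
      have h2 : (0:ℤ) ≤ if Good k g j then 1 else 0 := by positivity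
      rw [hT]
      linarith
  have hex : ∃ x, HH k g (j+1) x = T := by
    by_cases hG : Good k g j
    · refine ⟨r, ?_⟩
      rw [htrans r, if_pos rfl, hHr]
      have this2 : HH k g j (r + 1) = mm k g j := (good_iff g j).1 hG
      rw [hT, if_pos hG, this2]
      try ring
    · obtain ⟨x₀, hx₀⟩ := exists_mm (k := k) g j
      have hx₀r : x₀ ≠ r := by
        intro h
        rw [h, hHr] at hx₀
        have := mm_le (k := k) g j (r + 1)
        have hk' : (2:ℤ) ≤ k := by exact_mod_cast hk
        linarith
      refine ⟨x₀, ?_⟩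
      rw [htrans x₀, if_neg hx₀r, hx₀, hT, if_neg hG]
      try ring
  obtain ⟨xT, hxT⟩ := hex
  refine le_antisymm ?_ ?_
  · rw [← hxT]
    exact mm_le g (j+1) xT
  · apply Finset.le_min'
    intro y hy
    rw [Finset.mem_image] at hy
    obtain ⟨x, _, hx⟩ := hy
    rw [← hx]
    exact hub x

/-- Phase 1 conclusion: exactly `k` good shifts. -/
lemma good_count (g : Equiv.Perm (ZMod M)) (hM : 2 ≤ M) (hk : 2 ≤ k)
    (hg0 : g 0 = 0) (hS : hh k g 0 M = 0) :
    ((Finset.range M).filter (fun s : ℕ => Good k g ((s : ℕ) : ZMod M))).card = k := by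
  have hSall : ∀ j, hh k g j M = 0 := fun j => (hh_M_all g j hM hk).trans hS
  have hstep : ∀ s : ℕ, mm k g ((s+1 : ℕ) : ZMod M)
      = mm k g (s : ZMod M) + (if g.symm (-(s : ZMod M)) = 0 then (k:ℤ) else 0)
        - (if Good k g (s : ZMod M) then 1 else 0) := by
    intro s
    rw [Nat.cast_succ]
    exact mm_succ g _ hM hk (hSall _)
  have htel : (∑ s ∈ Finset.range M,
      (mm k g ((s+1:ℕ) : ZMod M) - mm k g ((s:ℕ) : ZMod M)))
      = mm k g ((M:ℕ) : ZMod M) - mm k g ((0:ℕ) : ZMod M) :=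
    Finset.sum_range_sub (fun s => mm k g ((s:ℕ) : ZMod M)) M
  rw [ZMod.natCast_self] at htel
  simp only [Nat.cast_zero, sub_self] at htel
  have heq : (∑ s ∈ Finset.range M,
      ((if g.symm (-(s : ZMod M)) = 0 then (k:ℤ) else 0)
        - (if Good k g (s : ZMod M) then 1 else 0))) = 0 := by
    have heq2 : (∑ s ∈ Finset.range M,
        ((if g.symm (-(s : ZMod M)) = 0 then (k:ℤ) else 0)
          - (if Good k g (s : ZMod M) then 1 else 0)))
        = (∑ s ∈ Finset.range M,
          (mm k g ((s+1:ℕ) : ZMod M) - mm k g ((s:ℕ) : ZMod M))) := by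
      apply Finset.sum_congr rfl
      intro s _
      rw [hstep s]
      ring
    rw [heq2, htel]
  rw [Finset.sum_sub_distrib] at heq
  have hc : (∑ s ∈ Finset.range M, (if g.symm (-(s : ZMod M)) = 0 then (k:ℤ) else 0)) = k := by
    have hcond : ∀ s, g.symm (-(s : ZMod M)) = 0 ↔ (s : ZMod M) = 0 := by
      intro s
      constructor
      · intro h
        have := congrArg g h
        rw [g.apply_symm_apply, hg0] at this
        have : (s : ZMod M) = 0 := by linear_combination -this
        exact this
      · intro h
        rw [h, neg_zero]
        exact (Equiv.symm_apply_eq g).2 hg0.symm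
    have : ∀ s ∈ Finset.range M, (if g.symm (-(s : ZMod M)) = 0 then (k:ℤ) else 0)
        = (if s = 0 then (k:ℤ) else 0) := by
      intro s hs
      apply if_congr _ rfl rfl
      rw [hcond s]
      constructor
      · intro h
        have := congrArg ZMod.val h
        rw [ZMod.val_cast_of_lt (Finset.mem_range.1 hs), ZMod.val_zero] at this
        exact this
      · intro h; rw [h, Nat.cast_zero]
    rw [Finset.sum_congr rfl this, Finset.sum_ite_eq' (Finset.range M) 0 (fun _ => (k:ℤ))]
    rw [if_pos (Finset.mem_range.2 (by omega))]
  rw [hc] at heq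
  have hd : (∑ s ∈ Finset.range M, (if Good k g (s : ZMod M) then (1:ℤ) else 0))
      = ((Finset.range M).filter (fun s : ℕ => Good k g ((s : ℕ) : ZMod M))).card := by
    simp [Finset.sum_boole]
  rw [hd] at heq
  have : ((((Finset.range M).filter (fun s : ℕ => Good k g ((s : ℕ) : ZMod M))).card : ℤ)) = (k:ℤ) := by
    linarith
  exact_mod_cast this

end basic

noncomputable def dgIn (g : Equiv.Perm (ZMod M)) (j : ZMod M) (ℓ : ℕ) : ℕ :=
  ((Finset.range ℓ).filter (fun i : ℕ => des g j (((i+1 : ℕ)) : ZMod M))).card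

def ballotF (k : ℕ) (g : Equiv.Perm (ZMod M)) : Prop :=
  ∀ ℓ ≤ M - 2, (k - 1) * dgIn g 0 ℓ ≤ ℓ - dgIn g 0 ℓ

def rho (j : ZMod M) (g : Equiv.Perm (ZMod M)) : Equiv.Perm (ZMod M) :=
  (Equiv.addRight (g.symm (-j))).trans (g.trans (Equiv.addRight j))

lemma rho_apply (j : ZMod M) (g : Equiv.Perm (ZMod M)) (t : ZMod M) :
    rho j g t = g (t + g.symm (-j)) + j := rfl

lemma hh_eq_card (g : Equiv.Perm (ZMod M)) (j : ZMod M) (t : ℕ) :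
    hh k g j t = (t : ℤ)
      - k * ((Finset.range t).filter (fun i : ℕ => des g j ((i : ℕ) : ZMod M))).card := by
  unfold hh wt
  have : ∀ i : ℕ, (if des g j ((i:ℕ) : ZMod M) then (1:ℤ) - k else 1)
      = 1 - k * (if des g j ((i:ℕ) : ZMod M) then (1:ℤ) else 0) := by
    intro i; by_cases h : des g j ((i:ℕ) : ZMod M) <;> simp [h]
  rw [Finset.sum_congr rfl (fun i _ => this i), Finset.sum_sub_distrib]
  rw [← Finset.mul_sum, Finset.sum_const, Finset.card_range]
  have : (∑ i ∈ Finset.range t, (if des g j ((i:ℕ) : ZMod M) then (1:ℤ) else 0))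
      = ((Finset.range t).filter (fun i : ℕ => des g j ((i : ℕ) : ZMod M))).card := by
    simp [Finset.sum_boole]
  rw [this]
  push_cast
  ring

section withM
variable [NeZero M]

noncomputable def Dfin (n : ℕ) : Finset (Equiv.Perm (ZMod M)) :=
  Finset.univ.filter (fun g => g 0 = 0 ∧ dgIn g 0 (M - 2) = n)

noncomputable def Bfin (k n : ℕ) : Finset (Equiv.Perm (ZMod M)) :=
  Finset.univ.filter (fun g => g 0 = 0 ∧ dgIn g 0 (M - 2) = n ∧ ballotF k g)

lemma des_at_zero (g : Equiv.Perm (ZMod M)) (hM : 2 ≤ M) (hg0 : g 0 = 0) :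
    des g 0 0 := by
  unfold des
  rw [zero_add, add_zero, add_zero, hg0, ordv_zero hM]
  apply ordv_lt_of_ne hM
  intro h
  have := g.injective (h.trans hg0.symm)
  exact two_le_of hM this

lemma not_des_at_last (g : Equiv.Perm (ZMod M)) (hM : 2 ≤ M) (hg0 : g 0 = 0) :
    ¬ des g 0 (((M-1 : ℕ)) : ZMod M) := by
  apply not_des_of_B_eq g 0 _ hM
  have : (((M-1 : ℕ)) : ZMod M) + 1 = 0 := by
    push_cast [Nat.cast_sub (by omega : 1 ≤ M)]
    simp [ZMod.natCast_self]
  rw [this, hg0, add_zero]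

/-- descent count over a full period at shift 0 is `n + 1` -/
lemma dcount_zero (g : Equiv.Perm (ZMod M)) (n : ℕ) (hM : 3 ≤ M) (hg0 : g 0 = 0)
    (hnd : dgIn g 0 (M - 2) = n) :
    ((Finset.range M).filter (fun i : ℕ => des g 0 ((i : ℕ) : ZMod M))).card = n + 1 := by
  classical
  have key : ∀ t : ℕ, ((Finset.range t).filter (fun i : ℕ => des g 0 ((i : ℕ) : ZMod M))).card
      = (∑ i ∈ Finset.range t, (if des g 0 ((i:ℕ) : ZMod M) then 1 else 0)) := by
    intro t; simp [Finset.sum_boole]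
  rw [key]
  have hM1 : Finset.range M = Finset.range ((M - 1) + 1) := by
    congr 1; omega
  rw [hM1, Finset.sum_range_succ]
  rw [if_neg (not_des_at_last g (by omega) hg0)]
  have hM2 : Finset.range (M - 1) = Finset.range ((M - 2) + 1) := by
    congr 1; omega
  rw [hM2, Finset.sum_range_succ']
  rw [if_pos (by rw [Nat.cast_zero]; exact des_at_zero g (by omega) hg0)]
  have : (∑ i ∈ Finset.range (M-2), (if des g 0 (((i+1 : ℕ)) : ZMod M) then 1 else 0))
      = dgIn g 0 (M - 2) := by
    unfold dgIn; simp [Finset.sum_boole]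
  rw [this, hnd]

lemma S_zero (g : Equiv.Perm (ZMod M)) (n : ℕ) (hM : 3 ≤ M) (hMk : M = k * (n+1))
    (hg0 : g 0 = 0) (hnd : dgIn g 0 (M - 2) = n) :
    hh k g 0 M = 0 := by
  rw [hh_eq_card, dcount_zero g n hM hg0 hnd, hMk]
  push_cast
  ring

lemma S_all (g : Equiv.Perm (ZMod M)) (n : ℕ) (hM : 3 ≤ M) (hk : 2 ≤ k)
    (hMk : M = k * (n+1)) (hg0 : g 0 = 0) (hnd : dgIn g 0 (M - 2) = n) (j : ZMod M) :
    hh k g j M = 0 :=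
  (hh_M_all g j (by omega) hk).trans (S_zero g n hM hMk hg0 hnd)

/-- total shifted descent count -/
lemma dcount_all (g : Equiv.Perm (ZMod M)) (n : ℕ) (hM : 3 ≤ M) (hk : 2 ≤ k)
    (hMk : M = k * (n+1)) (hg0 : g 0 = 0) (hnd : dgIn g 0 (M - 2) = n) (j : ZMod M) :
    ((Finset.range M).filter (fun i : ℕ => des g j ((i : ℕ) : ZMod M))).card = n + 1 := by
  have h0 := S_all g n hM hk hMk hg0 hnd j
  rw [hh_eq_card] at h0
  have hMZ : (M:ℤ) = (k:ℤ) * ((n:ℤ)+1) := by exact_mod_cast hMk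
  have : (k:ℤ) * ((Finset.range M).filter (fun i : ℕ => des g j ((i : ℕ) : ZMod M))).card
      = (k:ℤ) * ((n:ℤ)+1) := by linarith
  have hk0 : (k:ℤ) ≠ 0 := Nat.cast_ne_zero.2 (by omega)
  have := mul_left_cancel₀ hk0 this
  exact_mod_cast this

lemma rho_zero (j : ZMod M) (g : Equiv.Perm (ZMod M)) (hg0 : g 0 = 0) :
    rho j g 0 = 0 := by
  rw [rho_apply, zero_add, g.apply_symm_apply]
  ring

lemma des_rho (j x : ZMod M) (g : Equiv.Perm (ZMod M)) :
    des (rho j g) 0 x ↔ des g j (x + g.symm (-j)) := by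
  unfold des
  rw [rho_apply, rho_apply, add_zero, add_zero]
  have e1 : x + 1 + g.symm (-j) = (x + g.symm (-j)) + 1 := by ring
  rw [e1]

lemma not_des_at_rm1 (g : Equiv.Perm (ZMod M)) (j : ZMod M) (hM : 2 ≤ M) :
    ¬ des g j (g.symm (-j) - 1) := by
  apply not_des_of_B_eq g j _ hM
  have : g.symm (-j) - 1 + 1 = g.symm (-j) := by ring
  rw [this, g.apply_symm_apply]
  ring

lemma dgIn_rho (g : Equiv.Perm (ZMod M)) (n : ℕ) (hM : 3 ≤ M) (hk : 2 ≤ k)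
    (hMk : M = k * (n+1)) (hg0 : g 0 = 0) (hnd : dgIn g 0 (M - 2) = n) (j : ZMod M) :
    dgIn (rho j g) 0 (M - 2) = n := by
  classical
  set r := g.symm (-j) with hr
  have hA : dgIn (rho j g) 0 (M - 2)
      = ((Finset.range (M-2)).filter
          (fun i : ℕ => des g j ((((i+1:ℕ)) : ZMod M) + r))).card := by
    unfold dgIn
    congr 1
    apply Finset.filter_congr
    intro i _
    exact des_rho j _ g
  rw [hA]
  have hBmem : r.val ∈ (Finset.range M).filter (fun i : ℕ => des g j ((i : ℕ) : ZMod M)) := by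
    rw [Finset.mem_filter, Finset.mem_range]
    refine ⟨ZMod.val_lt r, ?_⟩
    rw [val_cast_val]
    exact des_at_r g j (by omega)
  have hcard : (((Finset.range M).filter
      (fun i : ℕ => des g j ((i : ℕ) : ZMod M))).erase r.val).card = n := by
    rw [Finset.card_erase_of_mem hBmem, dcount_all g n hM hk hMk hg0 hnd j]
    omega
  rw [← hcard]
  apply Finset.card_bij (fun i _ => ((((i+1:ℕ)) : ZMod M) + r).val)
  · -- membership
    intro i hi
    rw [Finset.mem_filter, Finset.mem_range] at hi
    obtain ⟨hilt, hides⟩ := hi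
    rw [Finset.mem_erase, Finset.mem_filter, Finset.mem_range]
    refine ⟨?_, ZMod.val_lt _, ?_⟩
    · intro h
      have : ((((i+1:ℕ)) : ZMod M) + r) = r := by
        rw [← val_cast_val ((((i+1:ℕ)) : ZMod M) + r), h, val_cast_val]
      have h2 : (((i+1:ℕ)) : ZMod M) = 0 := by linear_combination this
      have h3 := congrArg ZMod.val h2
      rw [ZMod.val_cast_of_lt (by omega : i + 1 < M), ZMod.val_zero] at h3
      omega
    · rw [val_cast_val]
      exact hides
  · -- injectivity
    intro i hi i' hi' h
    rw [Finset.mem_filter, Finset.mem_range] at hi hi'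
    have : ((((i+1:ℕ)) : ZMod M) + r) = ((((i'+1:ℕ)) : ZMod M) + r) := by
      rw [← val_cast_val ((((i+1:ℕ)) : ZMod M) + r), h, val_cast_val]
    have h2 : (((i+1:ℕ)) : ZMod M) = (((i'+1:ℕ)) : ZMod M) := by linear_combination this
    have h3 := congrArg ZMod.val h2
    rw [ZMod.val_cast_of_lt (by omega : i + 1 < M),
      ZMod.val_cast_of_lt (by omega : i' + 1 < M)] at h3
    omega
  · -- surjectivity
    intro b hb
    rw [Finset.mem_erase, Finset.mem_filter, Finset.mem_range] at hb
    obtain ⟨hbne, hblt, hbdes⟩ := hb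
    set x : ZMod M := ((b : ℕ) : ZMod M) with hx
    have hxr : x ≠ r := by
      intro h
      apply hbne
      rw [← ZMod.val_cast_of_lt hblt, ← hx, h]
    have hxrm1 : x ≠ r - 1 := by
      intro h
      exact not_des_at_rm1 g j (by omega) (h ▸ hbdes)
    have hxs0 : x - r ≠ 0 := fun h => hxr (by linear_combination h)
    have hxsm1 : x - r ≠ -1 := by
      intro h
      exact hxrm1 (by linear_combination h)
    have hv1 : 1 ≤ (x - r).val := by
      have := (ZMod.val_eq_zero (x - r)).not.2 hxs0; omega
    have hv2 : (x - r).val < M - 1 := val_lt_last (by omega) hxsm1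
    refine ⟨(x - r).val - 1, ?_, ?_⟩
    · rw [Finset.mem_filter, Finset.mem_range]
      constructor
      · omega
      · have e : ((((x - r).val - 1 + 1 : ℕ)) : ZMod M) = x - r := by
          rw [show (x - r).val - 1 + 1 = (x - r).val by omega, val_cast_val]
        rw [e, show x - r + r = x by ring]
        exact hbdes
    · have e : ((((x - r).val - 1 + 1 : ℕ)) : ZMod M) = x - r := by
        rw [show (x - r).val - 1 + 1 = (x - r).val by omega, val_cast_val]
      rw [e, show x - r + r = x by ring, hx, ZMod.val_cast_of_lt hblt]

lemma rho_mem_Dfin (g : Equiv.Perm (ZMod M)) (n : ℕ) (hM : 3 ≤ M) (hk : 2 ≤ k)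
    (hMk : M = k * (n+1)) (hg : g ∈ Dfin (M := M) n) (j : ZMod M) :
    rho j g ∈ Dfin (M := M) n := by
  rw [Dfin, Finset.mem_filter] at hg ⊢
  obtain ⟨-, hg0, hnd⟩ := hg
  exact ⟨Finset.mem_univ _, rho_zero j g hg0, dgIn_rho g n hM hk hMk hg0 hnd j⟩

lemma rho_inv (g : Equiv.Perm (ZMod M)) (j : ZMod M) (hg0 : g 0 = 0) :
    rho (-j) (rho j g) = g := by
  have hq : (rho j g).symm (-(-j)) = -(g.symm (-j)) := by
    rw [neg_neg, Equiv.symm_apply_eq, rho_apply]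
    rw [show -(g.symm (-j)) + g.symm (-j) = 0 by ring, hg0, zero_add]
  apply Equiv.ext
  intro t
  rw [rho_apply, hq, rho_apply]
  rw [show t + -(g.symm (-j)) + g.symm (-j) = t by ring]
  ring

lemma sum_wt_eq (g : Equiv.Perm (ZMod M)) (j : ZMod M) (f : ℕ → ZMod M) (ℓ : ℕ) :
    (∑ i ∈ Finset.range ℓ, wt k g j (f i)) = (ℓ : ℤ)
      - k * ((Finset.range ℓ).filter (fun i : ℕ => des g j (f i))).card := by
  unfold wt
  have : ∀ i : ℕ, (if des g j (f i) then (1:ℤ) - k else 1)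
      = 1 - k * (if des g j (f i) then (1:ℤ) else 0) := by
    intro i; by_cases h : des g j (f i) <;> simp [h]
  rw [Finset.sum_congr rfl (fun i _ => this i), Finset.sum_sub_distrib]
  rw [← Finset.mul_sum, Finset.sum_const, Finset.card_range]
  have : (∑ i ∈ Finset.range ℓ, (if des g j (f i) then (1:ℤ) else 0))
      = ((Finset.range ℓ).filter (fun i : ℕ => des g j (f i))).card := by
    simp [Finset.sum_boole]
  rw [this]
  push_cast
  ring

lemma hh_fold (g : Equiv.Perm (ZMod M)) (j : ZMod M) (hS : hh k g j M = 0) (t : ℕ) :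
    hh k g j t = HH k g j ((t : ℕ) : ZMod M) := by
  rw [hh_mod g j hS t]
  unfold HH
  rw [ZMod.val_natCast]

lemma window_sum (g : Equiv.Perm (ZMod M)) (j : ZMod M) (ℓ : ℕ) :
    hh k g j ((g.symm (-j)).val + 1 + ℓ) = hh k g j ((g.symm (-j)).val + 1)
      + ((ℓ : ℤ) - k * dgIn (rho j g) 0 ℓ) := by
  set r := g.symm (-j) with hr
  rw [hh_add g j (r.val + 1) ℓ]
  rw [sum_wt_eq g j (fun i => (((r.val + 1 + i : ℕ)) : ZMod M)) ℓ]
  have hd : ((Finset.range ℓ).filter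
      (fun i : ℕ => des g j ((((r.val + 1 + i : ℕ)) : ZMod M)))).card = dgIn (rho j g) 0 ℓ := by
    unfold dgIn
    congr 1
    apply Finset.filter_congr
    intro i _
    rw [des_rho j _ g, ← hr]
    have e : (((i+1:ℕ)) : ZMod M) + r = (((r.val + 1 + i : ℕ)) : ZMod M) := by
      push_cast [val_cast_val]
      ring
    rw [e]
  rw [hd]

lemma nat_ballot_iff (hk : 2 ≤ k) (d ℓ : ℕ) (hd : d ≤ ℓ) :
    ((k - 1) * d ≤ ℓ - d) ↔ ((k:ℤ) * d ≤ ℓ) := by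
  have h1 : (k - 1) * d + d = k * d := by
    have : k - 1 + 1 = k := by omega
    calc (k-1)*d + d = ((k-1)+1)*d := by ring
      _ = k * d := by rw [this]
  constructor
  · intro h
    have h2 : (k-1)*d + d ≤ ℓ := by omega
    rw [h1] at h2
    exact_mod_cast h2
  · intro h
    have h2 : k * d ≤ ℓ := by exact_mod_cast h
    rw [← h1] at h2
    omega

lemma dgIn_le (g : Equiv.Perm (ZMod M)) (j : ZMod M) (ℓ : ℕ) : dgIn g j ℓ ≤ ℓ := by
  unfold dgIn
  calc _ ≤ (Finset.range ℓ).card := Finset.card_filter_le _ _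
    _ = ℓ := Finset.card_range ℓ

lemma ballot_iff_good (g : Equiv.Perm (ZMod M)) (n : ℕ) (hM : 3 ≤ M) (hk : 2 ≤ k)
    (hMk : M = k * (n+1)) (hg0 : g 0 = 0) (hnd : dgIn g 0 (M - 2) = n) (j : ZMod M) :
    ballotF k (rho j g) ↔ Good k g j := by
  have hS := S_all g n hM hk hMk hg0 hnd j
  set r := g.symm (-j) with hr
  have hfold : ∀ t : ℕ, hh k g j t = HH k g j ((t : ℕ) : ZMod M) := hh_fold g j hS
  have hHH1 : hh k g j (r.val + 1) = HH k g j (r + 1) := by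
    rw [hfold]
    congr 1
    push_cast [val_cast_val]
    ring
  have hwin : ∀ ℓ : ℕ, HH k g j (r + 1 + ((ℓ:ℕ) : ZMod M))
      = HH k g j (r + 1) + ((ℓ : ℤ) - k * dgIn (rho j g) 0 ℓ) := by
    intro ℓ
    have h1 := window_sum (k := k) g j ℓ
    rw [hHH1] at h1
    rw [← h1, hfold]
    congr 1
    push_cast [val_cast_val]
    ring
  constructor
  · intro hb x
    rw [← hr]
    set ℓ := (x - (r+1)).val with hℓ
    have hℓlt : ℓ < M := ZMod.val_lt _
    have hxeq : r + 1 + ((ℓ:ℕ) : ZMod M) = x := by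
      rw [hℓ, val_cast_val]
      ring
    rcases le_or_gt ℓ (M - 2) with hc | hc
    · have hbℓ := hb ℓ hc
      have hkd : (k:ℤ) * dgIn (rho j g) 0 ℓ ≤ ℓ :=
        (nat_ballot_iff hk _ ℓ (dgIn_le _ _ ℓ)).1 hbℓ
      have := hwin ℓ
      rw [hxeq] at this
      rw [this]
      linarith
    · have hℓeq : ℓ = M - 1 := by omega
      have hxr : x = r := by
        rw [← hxeq, hℓeq]
        have : (((M - 1 : ℕ)) : ZMod M) = -1 := by
          push_cast [Nat.cast_sub (by omega : 1 ≤ M)]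
          simp [ZMod.natCast_self]
        rw [this]
        ring
      rw [hxr]
      have hHr : HH k g j r = HH k g j (r + 1) + ((k:ℤ) - 1) := Hrel g j (by omega) hk hS
      rw [hHr]
      have : (2:ℤ) ≤ k := by exact_mod_cast hk
      linarith
  · intro hG ℓ hℓ
    have h1 := hG (r + 1 + ((ℓ:ℕ) : ZMod M))
    rw [← hr] at h1
    rw [hwin ℓ] at h1
    have hkd : (k:ℤ) * dgIn (rho j g) 0 ℓ ≤ ℓ := by linarith
    exact (nat_ballot_iff hk _ ℓ (dgIn_le _ _ ℓ)).2 hkd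

lemma Bfin_subset (n : ℕ) : Bfin (M := M) k n ⊆ Dfin (M := M) n := by
  intro g hg
  rw [Bfin, Finset.mem_filter] at hg
  rw [Dfin, Finset.mem_filter]
  exact ⟨hg.1, hg.2.1, hg.2.2.1⟩

lemma mem_Bfin_iff_good (g : Equiv.Perm (ZMod M)) (n : ℕ) (hM : 3 ≤ M) (hk : 2 ≤ k)
    (hMk : M = k * (n+1)) (hg0 : g 0 = 0) (hnd : dgIn g 0 (M - 2) = n) (j : ZMod M) :
    rho j g ∈ Bfin (M := M) k n ↔ Good k g j := by
  rw [← ballot_iff_good g n hM hk hMk hg0 hnd j]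
  rw [Bfin, Finset.mem_filter]
  constructor
  · intro h; exact h.2.2.2
  · intro h
    exact ⟨Finset.mem_univ _, rho_zero j g hg0, dgIn_rho g n hM hk hMk hg0 hnd j, h⟩

/-- The master count: `|Dfin| = (n+1) * |Bfin|`. -/
lemma Dfin_card_eq (n : ℕ) (hM : 3 ≤ M) (hk : 2 ≤ k) (hMk : M = k * (n+1)) :
    (Dfin (M := M) n).card = (n + 1) * (Bfin (M := M) k n).card := by
  classical
  have hmemD : ∀ g ∈ Dfin (M := M) n, g 0 = 0 ∧ dgIn g 0 (M - 2) = n := by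
    intro g hg
    rw [Dfin, Finset.mem_filter] at hg
    exact hg.2
  -- the double count
  have key : ∀ g ∈ Dfin (M := M) n,
      ((Finset.range M).filter (fun s : ℕ => rho ((s:ℕ) : ZMod M) g ∈ Bfin (M := M) k n)).card
        = k := by
    intro g hg
    obtain ⟨hg0, hnd⟩ := hmemD g hg
    have hgc := good_count (k := k) g (by omega) hk hg0 (S_zero g n hM hMk hg0 hnd)
    have hcongr : ((Finset.range M).filter
        (fun s : ℕ => rho ((s:ℕ) : ZMod M) g ∈ Bfin (M := M) k n))
        = ((Finset.range M).filter (fun s : ℕ => Good k g ((s:ℕ) : ZMod M))) :=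
      Finset.filter_congr (fun s _ => mem_Bfin_iff_good g n hM hk hMk hg0 hnd _)
    rw [hcongr]
    exact hgc
  have hsum1 : (∑ g ∈ Dfin (M := M) n,
      ((Finset.range M).filter (fun s : ℕ => rho ((s:ℕ) : ZMod M) g ∈ Bfin (M := M) k n)).card)
      = k * (Dfin (M := M) n).card := by
    rw [Finset.sum_congr rfl key, Finset.sum_const, smul_eq_mul, mul_comm]
  have hswap : (∑ g ∈ Dfin (M := M) n,
      ((Finset.range M).filter (fun s : ℕ => rho ((s:ℕ) : ZMod M) g ∈ Bfin (M := M) k n)).card)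
      = ∑ s ∈ Finset.range M,
          ((Dfin (M := M) n).filter (fun g => rho ((s:ℕ) : ZMod M) g ∈ Bfin (M := M) k n)).card := by
    simp only [Finset.card_filter]
    rw [Finset.sum_comm]
  have hfiber : ∀ j : ZMod M,
      ((Dfin (M := M) n).filter (fun g => rho j g ∈ Bfin (M := M) k n)).card
        = (Bfin (M := M) k n).card := by
    intro j
    apply Finset.card_bij' (fun g _ => rho j g) (fun e _ => rho (-j) e)
    · intro g hg
      exact (Finset.mem_filter.1 hg).2
    · intro e he
      have heD : e ∈ Dfin (M := M) n := Bfin_subset n he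
      obtain ⟨he0, hend⟩ := hmemD e heD
      rw [Finset.mem_filter]
      refine ⟨rho_mem_Dfin e n hM hk hMk heD (-j), ?_⟩
      have : rho j (rho (-j) e) = e := by
        have := rho_inv e (-j) he0
        rwa [neg_neg] at this
      rw [this]
      exact he
    · intro g hg
      have hgD : g ∈ Dfin (M := M) n := (Finset.mem_filter.1 hg).1
      exact rho_inv g j (hmemD g hgD).1
    · intro e he
      have heD : e ∈ Dfin (M := M) n := Bfin_subset n he
      have := rho_inv e (-j) (hmemD e heD).1
      rwa [neg_neg] at this
  have hsum2 : (∑ s ∈ Finset.range M,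
      ((Dfin (M := M) n).filter (fun g => rho ((s:ℕ) : ZMod M) g ∈ Bfin (M := M) k n)).card)
      = M * (Bfin (M := M) k n).card := by
    rw [Finset.sum_congr rfl (fun s _ => hfiber ((s:ℕ) : ZMod M)), Finset.sum_const,
      smul_eq_mul, Finset.card_range]
  have hkey : k * (Dfin (M := M) n).card = M * (Bfin (M := M) k n).card := by
    rw [← hsum1, hswap, hsum2]
  have hM2 : M * (Bfin (M := M) k n).card = (k * (n+1)) * (Bfin (M := M) k n).card :=
    congrArg (fun m => m * (Bfin (M := M) k n).card) hMk
  have hk0 : 0 < k := by omega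
  apply Nat.eq_of_mul_eq_mul_left hk0
  rw [hkey, hM2]
  ring

end withM

section transfer

variable {N : ℕ}

/-- encode a permutation of `Fin N` as a permutation of `ZMod (N+1)` fixing `0`. -/
noncomputable def fwFun (w : Equiv.Perm (Fin N)) (x : ZMod (N+1)) : ZMod (N+1) :=
  if h : x.val = 0 then 0
  else (((w ⟨x.val - 1, by have := ZMod.val_lt x; omega⟩).val + 1 : ℕ) : ZMod (N+1))

lemma fwFun_inv (u v : Equiv.Perm (Fin N)) (huv : ∀ i, v (u i) = i) (x : ZMod (N+1)) :
    fwFun v (fwFun u x) = x := by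
  by_cases h : x.val = 0
  · have hinner : fwFun u x = 0 := by rw [fwFun, dif_pos h]
    rw [hinner, fwFun, dif_pos ZMod.val_zero]
    exact ((ZMod.val_eq_zero x).1 h).symm
  · set a : Fin N := u ⟨x.val - 1, by have := ZMod.val_lt x; omega⟩ with ha
    have hinner : fwFun u x = (((a.val + 1 : ℕ) : ZMod (N+1))) := by
      rw [fwFun, dif_neg h]
    rw [hinner]
    have hv : (((a.val + 1 : ℕ) : ZMod (N+1))).val = a.val + 1 :=
      ZMod.val_cast_of_lt (by have := a.isLt; omega)
    rw [fwFun, dif_neg (by omega)]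
    have e1 : (⟨(((a.val + 1 : ℕ) : ZMod (N+1))).val - 1,
        by have := ZMod.val_lt (((a.val + 1 : ℕ) : ZMod (N+1))); omega⟩ : Fin N) = a := by
      apply Fin.ext
      show (((a.val + 1 : ℕ) : ZMod (N+1))).val - 1 = a.val
      rw [hv]
      omega
    rw [e1, ha, huv]
    have hx := ZMod.val_lt x
    have : (x.val - 1 : ℕ) + 1 = x.val := by omega
    rw [this]
    exact val_cast_val x

noncomputable def fw (w : Equiv.Perm (Fin N)) : Equiv.Perm (ZMod (N+1)) where
  toFun := fwFun w
  invFun := fwFun w.symm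
  left_inv := fwFun_inv w w.symm (fun i => w.symm_apply_apply i)
  right_inv := fwFun_inv w.symm w (fun i => w.apply_symm_apply i)

lemma fw_zero (w : Equiv.Perm (Fin N)) : fw w 0 = 0 := by
  show fwFun w 0 = 0
  rw [fwFun, dif_pos ZMod.val_zero]

lemma fw_apply_pos (w : Equiv.Perm (Fin N)) (t : ℕ) (h1 : 1 ≤ t) (h2 : t ≤ N) :
    fw w ((t : ℕ) : ZMod (N+1))
      = (((w ⟨t - 1, by omega⟩).val + 1 : ℕ) : ZMod (N+1)) := by
  show fwFun w _ = _
  have hv : (((t : ℕ) : ZMod (N+1))).val = t := ZMod.val_cast_of_lt (by omega)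
  rw [fwFun, dif_neg (by omega)]
  congr 2 <;> simp [hv]

lemma ordv_fw (w : Equiv.Perm (Fin N)) (t : ℕ) (h1 : 1 ≤ t) (h2 : t ≤ N) :
    ordv (fw w ((t : ℕ) : ZMod (N+1)) + 0) = (w ⟨t - 1, by omega⟩).val := by
  rw [add_zero, fw_apply_pos w t h1 h2]
  unfold ordv
  have e : ((((w ⟨t - 1, by omega⟩).val + 1 : ℕ) : ZMod (N+1))) - 1
      = (((w ⟨t - 1, by omega⟩).val : ℕ) : ZMod (N+1)) := by
    push_cast
    ring
  rw [e, ZMod.val_cast_of_lt (by have := (w ⟨t - 1, by omega⟩).isLt; omega)]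

lemma des_fw (w : Equiv.Perm (Fin N)) (i : ℕ) (hi : i + 1 < N) :
    des (fw w) 0 (((i+1 : ℕ)) : ZMod (N+1))
      ↔ w ⟨i + 1, hi⟩ < w ⟨i, by omega⟩ := by
  unfold des
  have e : ((((i+1:ℕ)) : ZMod (N+1))) + 1 = (((i+2:ℕ)) : ZMod (N+1)) := by push_cast; ring
  rw [e]
  rw [ordv_fw w (i+2) (by omega) (by omega), ordv_fw w (i+1) (by omega) (by omega)]
  have e1 : (⟨i + 2 - 1, by omega⟩ : Fin N) = ⟨i + 1, hi⟩ := by apply Fin.ext; simp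
  have e2 : (⟨i + 1 - 1, by omega⟩ : Fin N) = ⟨i, by omega⟩ := by apply Fin.ext; simp
  rw [e1, e2, Fin.lt_iff_val_lt_val]

lemma descentsIn_eq_dgIn (w : Equiv.Perm (Fin N)) (ℓ : ℕ) (hℓ : ℓ + 1 ≤ N) :
    descentsIn w ℓ = dgIn (fw w) 0 ℓ := by
  unfold descentsIn dgIn
  congr 1
  apply Finset.filter_congr
  intro i hi
  rw [Finset.mem_range] at hi
  have hiN : i + 1 < N := by omega
  rw [des_fw w i hiN]
  constructor
  · rintro ⟨h, hlt⟩; exact hlt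
  · intro hlt; exact ⟨hiN, hlt⟩

lemma fw_injective : Function.Injective (fw (N := N)) := by
  intro w w' h
  apply Equiv.ext
  intro i
  have hi := i.isLt
  have h1 := congrArg (fun g : Equiv.Perm (ZMod (N+1)) => g (((i.val+1 : ℕ)) : ZMod (N+1))) h
  rw [fw_apply_pos w (i.val+1) (by omega) (by omega),
    fw_apply_pos w' (i.val+1) (by omega) (by omega)] at h1
  have e : (⟨i.val + 1 - 1, by omega⟩ : Fin N) = i := by apply Fin.ext; simp
  rw [e] at h1
  have h2 := congrArg ZMod.val h1
  rw [ZMod.val_cast_of_lt (by have := (w i).isLt; omega),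
    ZMod.val_cast_of_lt (by have := (w' i).isLt; omega)] at h2
  exact Fin.ext (by omega)

/-- surjectivity: every `g` fixing `0` comes from some `w`. -/
noncomputable def unfw (g : Equiv.Perm (ZMod (N+1))) (hg0 : g 0 = 0) : Equiv.Perm (Fin N) where
  toFun i := ⟨(g (((i.val+1 : ℕ)) : ZMod (N+1))).val - 1, by
    have hne : g (((i.val+1 : ℕ)) : ZMod (N+1)) ≠ 0 := by
      intro h
      have : (((i.val+1 : ℕ)) : ZMod (N+1)) = 0 := g.injective (h.trans hg0.symm)
      have h3 := congrArg ZMod.val this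
      rw [ZMod.val_cast_of_lt (by have := i.isLt; omega), ZMod.val_zero] at h3
      omega
    have h1 := (ZMod.val_eq_zero (g (((i.val+1 : ℕ)) : ZMod (N+1)))).not.2 hne
    have h2 := ZMod.val_lt (g (((i.val+1 : ℕ)) : ZMod (N+1)))
    omega⟩
  invFun i := ⟨(g.symm (((i.val+1 : ℕ)) : ZMod (N+1))).val - 1, by
    have hgs0 : g.symm 0 = 0 := by
      apply g.injective
      rw [g.apply_symm_apply, hg0]
    have hne : g.symm (((i.val+1 : ℕ)) : ZMod (N+1)) ≠ 0 := by
      intro h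
      have : (((i.val+1 : ℕ)) : ZMod (N+1)) = 0 := g.symm.injective (h.trans hgs0.symm)
      have h3 := congrArg ZMod.val this
      rw [ZMod.val_cast_of_lt (by have := i.isLt; omega), ZMod.val_zero] at h3
      omega
    have h1 := (ZMod.val_eq_zero (g.symm (((i.val+1 : ℕ)) : ZMod (N+1)))).not.2 hne
    have h2 := ZMod.val_lt (g.symm (((i.val+1 : ℕ)) : ZMod (N+1)))
    omega⟩
  left_inv := by
    intro i
    apply Fin.ext
    simp only
    have hne : g (((i.val+1 : ℕ)) : ZMod (N+1)) ≠ 0 := by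
      intro h
      have : (((i.val+1 : ℕ)) : ZMod (N+1)) = 0 := g.injective (h.trans hg0.symm)
      have h3 := congrArg ZMod.val this
      rw [ZMod.val_cast_of_lt (by have := i.isLt; omega), ZMod.val_zero] at h3
      omega
    have h1 := (ZMod.val_eq_zero (g (((i.val+1 : ℕ)) : ZMod (N+1)))).not.2 hne
    have e : ((g (((i.val+1 : ℕ)) : ZMod (N+1))).val - 1) + 1
        = (g (((i.val+1 : ℕ)) : ZMod (N+1))).val := by omega
    rw [e, val_cast_val, g.symm_apply_apply,
      ZMod.val_cast_of_lt (by have := i.isLt; omega)]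
    omega
  right_inv := by
    intro i
    apply Fin.ext
    simp only
    have hgs0 : g.symm 0 = 0 := by
      apply g.injective
      rw [g.apply_symm_apply, hg0]
    have hne : g.symm (((i.val+1 : ℕ)) : ZMod (N+1)) ≠ 0 := by
      intro h
      have : (((i.val+1 : ℕ)) : ZMod (N+1)) = 0 := g.symm.injective (h.trans hgs0.symm)
      have h3 := congrArg ZMod.val this
      rw [ZMod.val_cast_of_lt (by have := i.isLt; omega), ZMod.val_zero] at h3
      omega
    have h1 := (ZMod.val_eq_zero (g.symm (((i.val+1 : ℕ)) : ZMod (N+1)))).not.2 hne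
    have e : ((g.symm (((i.val+1 : ℕ)) : ZMod (N+1))).val - 1) + 1
        = (g.symm (((i.val+1 : ℕ)) : ZMod (N+1))).val := by omega
    rw [e, val_cast_val, g.apply_symm_apply,
      ZMod.val_cast_of_lt (by have := i.isLt; omega)]
    omega

lemma fw_unfw (g : Equiv.Perm (ZMod (N+1))) (hg0 : g 0 = 0) : fw (unfw g hg0) = g := by
  apply Equiv.ext
  intro x
  by_cases h : x.val = 0
  · have hx : x = 0 := (ZMod.val_eq_zero x).1 h
    rw [hx, fw_zero, hg0]
  · have hxlt := ZMod.val_lt x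
    have hx : x = (((x.val : ℕ)) : ZMod (N+1)) := (val_cast_val x).symm
    conv_lhs => rw [hx]
    rw [fw_apply_pos _ x.val (by omega) (by omega)]
    show ((((unfw g hg0 ⟨x.val - 1, by omega⟩)).val + 1 : ℕ) : ZMod (N+1)) = g x
    have : (unfw g hg0 ⟨x.val - 1, by omega⟩).val
        = (g ((((x.val - 1) + 1 : ℕ)) : ZMod (N+1))).val - 1 := rfl
    rw [this]
    have e : (x.val - 1) + 1 = x.val := by omega
    rw [e]
    have hgx : (((x.val : ℕ)) : ZMod (N+1)) = x := val_cast_val x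
    rw [hgx]
    have hne : g x ≠ 0 := by
      intro hh
      have : x = 0 := g.injective (hh.trans hg0.symm)
      exact h (by rw [this]; exact ZMod.val_zero)
    have h1 := (ZMod.val_eq_zero (g x)).not.2 hne
    have e2 : ((g x).val - 1) + 1 = (g x).val := by omega
    rw [e2, val_cast_val]

end transfer

end KDyck

/-- The number of permutations in `S_{kn+k-1}` whose ascent/descent vector is
a `(k-1)`-ballot sequence is `A(n, kn+k-1)/(n+1)`. -/
theorem card_kDyckPerm_eq (k n : ℕ) (hk : 2 ≤ k) (hn : 1 ≤ n) :
    (Finset.univ.filter (fun w : Equiv.Perm (Fin (k * n + k - 1)) =>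
        IsKDyckPerm k n w)).card
      = eulerian n (k * n + k - 1) / (n + 1) := by
  classical
  have hkn : 2 ≤ k * n := by
    have h1 : k * 1 ≤ k * n := Nat.mul_le_mul_left k hn
    omega
  set N : ℕ := k * n + k - 1 with hN
  have hN1 : N + 1 = k * n + k := by omega
  have hMk : N + 1 = k * (n + 1) := by rw [hN1]; ring
  have hM3 : 3 ≤ N + 1 := by omega
  have hsub : (N + 1) - 2 = N - 1 := by omega
  have hNk2 : N - 1 = k * n + k - 2 := by omega
  -- Eulerian side
  have hD : eulerian n N = (KDyck.Dfin (M := N+1) n).card := by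
    unfold eulerian KDyck.Dfin
    apply Finset.card_bij (fun w _ => KDyck.fw w)
    · intro w hw
      rw [Finset.mem_filter] at hw ⊢
      refine ⟨Finset.mem_univ _, KDyck.fw_zero w, ?_⟩
      rw [hsub, ← KDyck.descentsIn_eq_dgIn w (N-1) (by omega)]
      exact hw.2
    · intro w _ w' _ h
      exact KDyck.fw_injective h
    · intro g hg
      rw [Finset.mem_filter] at hg
      obtain ⟨-, hg0, hdg⟩ := hg
      refine ⟨KDyck.unfw g hg0, ?_, KDyck.fw_unfw g hg0⟩
      rw [Finset.mem_filter]
      refine ⟨Finset.mem_univ _, ?_⟩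
      show descentsIn _ (N - 1) = n
      rw [KDyck.descentsIn_eq_dgIn _ (N-1) (by omega), KDyck.fw_unfw g hg0, ← hsub]
      exact hdg
  -- Dyck side
  have hBallotIff : ∀ w : Equiv.Perm (Fin N), descents w = n →
      ((∀ ℓ ≤ k * n + k - 2, (k - 1) * descentsIn w ℓ ≤ ℓ - descentsIn w ℓ)
        ↔ KDyck.ballotF (M := N+1) k (KDyck.fw w)) := by
    intro w _
    unfold KDyck.ballotF
    rw [hsub, hNk2]
    constructor
    · intro h ℓ hℓ
      rw [← KDyck.descentsIn_eq_dgIn w ℓ (by omega)]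
      exact h ℓ hℓ
    · intro h ℓ hℓ
      have := h ℓ hℓ
      rwa [← KDyck.descentsIn_eq_dgIn w ℓ (by omega)] at this
  have hB : (Finset.univ.filter (fun w : Equiv.Perm (Fin N) =>
      IsKDyckPerm k n w)).card = (KDyck.Bfin (M := N+1) k n).card := by
    unfold KDyck.Bfin
    apply Finset.card_bij (fun w _ => KDyck.fw w)
    · intro w hw
      rw [Finset.mem_filter] at hw ⊢
      obtain ⟨-, hdes, hball⟩ := hw
      refine ⟨Finset.mem_univ _, KDyck.fw_zero w, ?_, ?_⟩
      · rw [hsub, ← KDyck.descentsIn_eq_dgIn w (N-1) (by omega)]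
        exact hdes
      · exact (hBallotIff w hdes).1 hball
    · intro w _ w' _ h
      exact KDyck.fw_injective h
    · intro g hg
      rw [Finset.mem_filter] at hg
      obtain ⟨-, hg0, hdg, hball⟩ := hg
      refine ⟨KDyck.unfw g hg0, ?_, KDyck.fw_unfw g hg0⟩
      rw [Finset.mem_filter]
      have hdes : descents (KDyck.unfw g hg0) = n := by
        show descentsIn _ (N - 1) = n
        rw [KDyck.descentsIn_eq_dgIn _ (N-1) (by omega), KDyck.fw_unfw g hg0, ← hsub]
        exact hdg
      refine ⟨Finset.mem_univ _, hdes, ?_⟩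
      apply (hBallotIff _ hdes).2
      rw [KDyck.fw_unfw g hg0]
      exact hball
  rw [hB, hD, KDyck.Dfin_card_eq n hM3 hk hMk, Nat.mul_div_cancel_left _ (by omega : 0 < n + 1)]
end

section
/- For n ≥ 1, the number of permutations of [2n+1] with exactly n descents whose associated lattice path is a Dyck path (all points (x,y) on the path satisfy y ≤ x) equals the number of permutations of [2n] with n-1 or n descents divided as A(n-1,2n) + A(n,2n), via the bijection that cycles the permutation until 2n+1 is last and deletes it. -/
open scoped Classical

/-- `w ∈ S_{2n+1}` with `n` descents has a Dyck lattice path: after `ℓ` steps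
the path is at `(ℓ - d_ℓ, d_ℓ)`, and every point `(x,y)` satisfies `y ≤ x`. -/
noncomputable def IsDyckPerm (n : ℕ) (w : Equiv.Perm (Fin (2 * n + 1))) : Prop :=
  descents w = n ∧ ∀ ℓ ≤ 2 * n, descentsIn w ℓ ≤ ℓ - descentsIn w ℓ

-- generic sum of ±1 lemma
lemma sum_pm (g : ℕ → ℤ) (hg : ∀ i, g i = 1 ∨ g i = -1) (ℓ : ℕ) :
    ∑ i ∈ Finset.range ℓ, g i
      = (ℓ : ℤ) - 2 * ((Finset.range ℓ).filter (fun i => g i = -1)).card := by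
  induction ℓ with
  | zero => simp
  | succ m ih =>
    rw [Finset.sum_range_succ, Finset.range_add_one, Finset.filter_insert, ih]
    rcases hg m with h | h
    · rw [if_neg (by rw [h]; norm_num)]
      push_cast; rw [h]; ring
    · rw [if_pos h, Finset.card_insert_of_notMem (by simp)]
      push_cast; rw [h]; ring


section CycleLemmaSec
variable {n : ℕ} {ε : ℤ} {T : ℕ → ℤ}

def CondC (n : ℕ) (T : ℕ → ℤ) (k : ℕ) : Prop :=
  k < 2*n+1 ∧ (∀ ℓ ≤ 2*n, T k ≤ T (k+ℓ)) ∧ T (k + 2*n) = T k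


lemma cond_eps (hstep : ∀ m, T (m+1) = T m + 1 ∨ T (m+1) = T m - 1)
    (hper : ∀ m, T (m + (2*n+1)) = T m + ε) {k : ℕ} (hk : CondC n T k) :
    ε = 1 ∨ ε = -1 := by
  have h1 := hstep (k + 2*n)
  have h2 := hper k
  have h3 := hk.2.2
  have : k + 2*n + 1 = k + (2*n+1) := by omega
  rw [this] at h1
  omega

lemma cond_uniq (hstep : ∀ m, T (m+1) = T m + 1 ∨ T (m+1) = T m - 1)
    (hper : ∀ m, T (m + (2*n+1)) = T m + ε)
    {k k' : ℕ} (hk : CondC n T k) (hk' : CondC n T k') (hlt : k < k') : False := by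
  obtain ⟨hkP, hkA, hkE⟩ := hk
  obtain ⟨hk'P, hk'A, hk'E⟩ := hk'
  have h1 : T k ≤ T k' := by
    have := hkA (k' - k) (by omega)
    rwa [show k + (k' - k) = k' by omega] at this
  have h2 : T k' ≤ T k + ε := by
    have := hk'A (2*n+1 - (k' - k)) (by omega)
    rwa [show k' + (2*n+1 - (k' - k)) = k + (2*n+1) by omega, hper k] at this
  rcases cond_eps hstep hper ⟨hkP, hkA, hkE⟩ with h | h
  · -- ε = 1
    have h3 : T (k' - 1) = T k' - 1 := by
      have := hper (k' - 1)
      rw [show k' - 1 + (2*n+1) = k' + 2*n by omega, hk'E, h] at this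
      omega
    have h4 : T k ≤ T (k' - 1) := by
      have := hkA (k' - 1 - k) (by omega)
      rwa [show k + (k' - 1 - k) = k' - 1 by omega] at this
    have h5 : T k' ≤ T (k + 2*n) := by
      have := hk'A (k + 2*n - k') (by omega)
      rwa [show k' + (k + 2*n - k') = k + 2*n by omega] at this
    rw [hkE] at h5
    omega
  · omega

lemma cond_exists (hn : 1 ≤ n)
    (hstep : ∀ m, T (m+1) = T m + 1 ∨ T (m+1) = T m - 1)
    (hper : ∀ m, T (m + (2*n+1)) = T m + ε) (hε : ε = 1 ∨ ε = -1) :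
    ∃ k, CondC n T k := by
  -- minimizers over range (2n+1)
  obtain ⟨M, hM⟩ : ∃ M, M ∈ ((Finset.range (2*n+1)).image T) ∧
      ∀ x ∈ (Finset.range (2*n+1)).image T, M ≤ x := by
    obtain ⟨M, h1, h2⟩ := Finset.exists_min_image ((Finset.range (2*n+1)).image T) id (by simp)
    exact ⟨M, h1, fun x hx => h2 x hx⟩
  have hmin : ∀ j < 2*n+1, M ≤ T j := by
    intro j hj; exact hM.2 _ (Finset.mem_image_of_mem T (Finset.mem_range.mpr hj))
  set A : Finset ℕ := (Finset.range (2*n+1)).filter (fun j => T j = M) with hA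
  have hAne : A.Nonempty := by
    obtain ⟨j, hj, hjv⟩ := Finset.mem_image.mp hM.1
    exact ⟨j, by simp [hA, Finset.mem_range.mp hj, hjv]⟩
  rcases hε with hε | hε
  · -- ε = 1 : take c = largest minimizer
    set c := A.max' hAne with hc
    have hcA : c ∈ A := A.max'_mem hAne
    have hcP : c < 2*n+1 := Finset.mem_range.mp (Finset.mem_filter.mp hcA).1
    have hcM : T c = M := (Finset.mem_filter.mp hcA).2
    have hafter : ∀ j, c < j → j < 2*n+1 → M + 1 ≤ T j := by
      intro j h1 h2
      have hne : T j ≠ M := by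
        intro hval
        have : j ∈ A := Finset.mem_filter.mpr ⟨Finset.mem_range.mpr h2, hval⟩
        exact absurd (A.le_max' j this) (by omega)
      have := hmin j h2
      omega
    have hwin : ∀ m, c + 1 ≤ m → m ≤ c + (2*n+1) → M + 1 ≤ T m := by
      intro m h1 h2
      by_cases h3 : m < 2*n+1
      · exact hafter m (by omega) h3
      · have := hper (m - (2*n+1))
        rw [show m - (2*n+1) + (2*n+1) = m by omega, hε] at this
        have := hmin (m - (2*n+1)) (by omega)
        omega
    by_cases hcase : c < 2*n
    · refine ⟨c+1, by omega, ?_, ?_⟩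
      · intro ℓ hℓ
        have hb : T (c+1) = M + 1 := by
          have := hwin (c+1) (by omega) (by omega)
          have := hstep c
          omega
        rw [hb]
        exact hwin (c+1+ℓ) (by omega) (by omega)
      · have := hwin (c+1) (by omega) (by omega)
        have hs := hstep c
        have hb : T (c+1) = M + 1 := by omega
        have := hper c
        rw [show c + (2*n+1) = c+1+2*n by omega, hcM, hε] at this
        omega
    · -- c = 2n, take k = 0
      have hc2n : c = 2*n := by omega
      have hT0 : T 0 = M := by
        have h1 := hper 0
        rw [hε] at h1
        have h2 := hstep (2*n)
        rw [show 2*n+1 = 0 + (2*n+1) by omega] at h2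
        have h3 : T (2*n) = M := by rw [← hc2n, hcM]
        have := hmin 0 (by omega)
        omega
      refine ⟨0, by omega, ?_, ?_⟩
      · intro ℓ hℓ; rw [hT0, Nat.zero_add]; exact hmin ℓ (by omega)
      · rw [Nat.zero_add, hT0, ← hc2n, hcM]
  · -- ε = -1 : take b = smallest minimizer
    set b := A.min' hAne with hb
    have hbA : b ∈ A := A.min'_mem hAne
    have hbP : b < 2*n+1 := Finset.mem_range.mp (Finset.mem_filter.mp hbA).1
    have hbM : T b = M := (Finset.mem_filter.mp hbA).2
    have hbefore : ∀ j, j < b → M + 1 ≤ T j := by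
      intro j h1
      have hne : T j ≠ M := by
        intro hval
        have : j ∈ A := Finset.mem_filter.mpr ⟨Finset.mem_range.mpr (by omega), hval⟩
        exact absurd (A.min'_le j this) (by omega)
      have := hmin j (by omega)
      omega
    refine ⟨b, hbP, ?_, ?_⟩
    · intro ℓ hℓ
      by_cases h3 : b + ℓ < 2*n+1
      · rw [hbM]; exact hmin _ h3
      · have h4 := hper (b + ℓ - (2*n+1))
        rw [show b + ℓ - (2*n+1) + (2*n+1) = b + ℓ by omega, hε] at h4
        have := hbefore (b + ℓ - (2*n+1)) (by omega)
        omega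
    · by_cases hb0 : b = 0
      · rw [hb0] at hbM ⊢
        have h1 := hmin (2*n) (by omega)
        have h2 := hstep (2*n)
        have h3 := hper 0
        rw [hε] at h3
        rw [show 2*n+1 = 0 + (2*n+1) by omega] at h2
        rw [Nat.zero_add]
        omega
      · have h1 := hbefore (b-1) (by omega)
        have h2 := hstep (b-1)
        rw [show b - 1 + 1 = b by omega] at h2
        have h3 : T (b-1) = T b + 1 := by omega
        have h4 := hper (b-1)
        rw [show b - 1 + (2*n+1) = b + 2*n by omega, hε] at h4
        omega

end CycleLemmaSec

section Perms
variable {n : ℕ}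
open Fin.NatCast

noncomputable def extP (w' : Equiv.Perm (Fin (2*n))) : Equiv.Perm (Fin (2*n+1)) :=
  Equiv.Perm.decomposeFin.symm (0, w')

noncomputable def rotP (k : Fin (2*n+1)) (u : Equiv.Perm (Fin (2*n+1))) :
    Equiv.Perm (Fin (2*n+1)) :=
  (Equiv.addRight k).trans u

lemma rotP_apply (k : Fin (2*n+1)) (u : Equiv.Perm (Fin (2*n+1))) (j : Fin (2*n+1)) :
    rotP k u j = u (j + k) := rfl

noncomputable def stepI (u : Equiv.Perm (Fin (2*n+1))) (m : ℕ) : ℤ :=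
  if u (((m+1 : ℕ) : Fin (2*n+1))) < u ((m : Fin (2*n+1))) then -1 else 1

noncomputable def TI (u : Equiv.Perm (Fin (2*n+1))) (m : ℕ) : ℤ :=
  ∑ i ∈ Finset.range m, stepI u i

lemma stepI_pm (u : Equiv.Perm (Fin (2*n+1))) (m : ℕ) : stepI u m = 1 ∨ stepI u m = -1 := by
  unfold stepI; split <;> simp

lemma TI_succ (u : Equiv.Perm (Fin (2*n+1))) (m : ℕ) : TI u (m+1) = TI u m + stepI u m :=
  Finset.sum_range_succ _ _

lemma TI_step (u : Equiv.Perm (Fin (2*n+1))) (m : ℕ) :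
    TI u (m+1) = TI u m + 1 ∨ TI u (m+1) = TI u m - 1 := by
  rw [TI_succ]; rcases stepI_pm u m with h | h <;> rw [h] <;> [left; right] <;> ring

lemma stepI_per (u : Equiv.Perm (Fin (2*n+1))) (m : ℕ) :
    stepI u (m + (2*n+1)) = stepI u m := by
  unfold stepI
  have h0 : ((2*n+1 : ℕ) : Fin (2*n+1)) = 0 := Fin.natCast_self _
  have h1 : ((m + (2*n+1) : ℕ) : Fin (2*n+1)) = (m : Fin (2*n+1)) := by
    rw [Nat.cast_add, h0, add_zero]
  have h2 : ((m + (2*n+1) + 1 : ℕ) : Fin (2*n+1)) = ((m+1 : ℕ) : Fin (2*n+1)) := by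
    rw [show m + (2*n+1) + 1 = (m+1) + (2*n+1) by omega, Nat.cast_add, h0, add_zero]
  rw [h1, h2]

lemma TI_per (u : Equiv.Perm (Fin (2*n+1))) (m : ℕ) :
    TI u (m + (2*n+1)) = TI u m + TI u (2*n+1) := by
  induction m with
  | zero => simp [TI]
  | succ m ih =>
    rw [show m + 1 + (2*n+1) = (m + (2*n+1)) + 1 by omega, TI_succ, ih, stepI_per,
      TI_succ u m]
    ring

lemma TI_add (u : Equiv.Perm (Fin (2*n+1))) (k ℓ : ℕ) :
    TI u (k + ℓ) = TI u k + ∑ i ∈ Finset.range ℓ, stepI u (k + i) := by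
  induction ℓ with
  | zero => simp
  | succ ℓ ih => rw [show k + (ℓ+1) = (k+ℓ)+1 by omega, TI_succ, ih, Finset.sum_range_succ]; ring


lemma descentsIn_le {N : ℕ} (w : Equiv.Perm (Fin N)) (ℓ : ℕ) : descentsIn w ℓ ≤ ℓ :=
  le_trans (Finset.card_filter_le _ _) (le_of_eq (Finset.card_range ℓ))

lemma descentsIn_rot (u : Equiv.Perm (Fin (2*n+1))) (k : Fin (2*n+1)) {ℓ : ℕ} (hℓ : ℓ ≤ 2*n) :
    descentsIn (rotP k u) ℓ
      = ((Finset.range ℓ).filter (fun i => stepI u (k.val + i) = -1)).card := by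
  unfold descentsIn
  congr 1
  apply Finset.filter_congr
  intro i hi
  have hi' : i < ℓ := Finset.mem_range.mp hi
  have h1 : i + 1 < 2*n+1 := by omega
  have e1 : rotP k u ⟨i+1, h1⟩ = u (((k.val + i + 1 : ℕ) : Fin (2*n+1))) := by
    rw [rotP_apply]
    congr 1
    have hh : (⟨i+1, h1⟩ : Fin (2*n+1)) = ((i+1 : ℕ) : Fin (2*n+1)) := by
      ext; rw [Fin.val_cast_of_lt h1]
    rw [hh]
    conv_lhs => rw [← Fin.cast_val_eq_self k]
    rw [← Nat.cast_add]
    congr 1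
    omega
  have e2 : rotP k u ⟨i, Nat.lt_of_succ_lt h1⟩ = u (((k.val + i : ℕ) : Fin (2*n+1))) := by
    rw [rotP_apply]
    congr 1
    have hh : (⟨i, Nat.lt_of_succ_lt h1⟩ : Fin (2*n+1)) = ((i : ℕ) : Fin (2*n+1)) := by
      ext; rw [Fin.val_cast_of_lt (Nat.lt_of_succ_lt h1)]
    rw [hh]
    conv_lhs => rw [← Fin.cast_val_eq_self k]
    rw [← Nat.cast_add]
    congr 1
    omega
  have key : (∃ h : i + 1 < 2*n+1,
      rotP k u ⟨i+1, h⟩ < rotP k u ⟨i, Nat.lt_of_succ_lt h⟩)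
      ↔ u (((k.val + i + 1 : ℕ) : Fin (2*n+1))) < u (((k.val + i : ℕ) : Fin (2*n+1))) := by
    constructor
    · rintro ⟨h, hlt⟩
      rwa [e1, e2] at hlt
    · intro h
      exact ⟨h1, by rwa [e1, e2]⟩
  rw [key]
  unfold stepI
  rw [show k.val + i + 1 = k.val + i + 1 from rfl]
  split <;> simp_all

lemma TI_rot (u : Equiv.Perm (Fin (2*n+1))) (k : Fin (2*n+1)) {ℓ : ℕ} (hℓ : ℓ ≤ 2*n) :
    TI u (k.val + ℓ) = TI u k.val + ℓ - 2 * (descentsIn (rotP k u) ℓ : ℤ) := by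
  rw [TI_add, sum_pm (fun i => stepI u (k.val + i)) (fun i => stepI_pm u _),
    descentsIn_rot u k hℓ]
  ring

lemma isDyck_iff_cond (u : Equiv.Perm (Fin (2*n+1))) (k : Fin (2*n+1)) :
    IsDyckPerm n (rotP k u) ↔ CondC n (TI u) k.val := by
  have h2n : 2*n+1-1 = 2*n := by omega
  have hdes : descents (rotP k u) = descentsIn (rotP k u) (2*n) := by
    rw [descents, h2n]
  constructor
  · rintro ⟨hd, hall⟩
    refine ⟨k.isLt, ?_, ?_⟩
    · intro ℓ hℓ
      have hD := descentsIn_le (rotP k u) ℓ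
      have := hall ℓ hℓ
      have := TI_rot u k hℓ
      omega
    · rw [hdes] at hd
      have := TI_rot u k (le_refl (2*n))
      omega
  · rintro ⟨_, hall, heq⟩
    constructor
    · rw [hdes]
      have := TI_rot u k (le_refl (2*n))
      omega
    · intro ℓ hℓ
      have hD := descentsIn_le (rotP k u) ℓ
      have := hall ℓ hℓ
      have := TI_rot u k hℓ
      omega


lemma extP_zero (w' : Equiv.Perm (Fin (2*n))) : extP w' 0 = 0 :=
  Equiv.Perm.decomposeFin_symm_apply_zero 0 w'

lemma extP_succ (w' : Equiv.Perm (Fin (2*n))) (j : Fin (2*n)) :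
    extP w' (Fin.succ j) = Fin.succ (w' j) := by
  rw [extP, Equiv.Perm.decomposeFin_symm_apply_succ, Equiv.swap_self]
  rfl

lemma cast_eq_succ {i : ℕ} (h1 : 1 ≤ i) (h2 : i ≤ 2*n) :
    ((i : ℕ) : Fin (2*n+1)) = Fin.succ (⟨i-1, by omega⟩ : Fin (2*n)) := by
  ext
  rw [Fin.val_cast_of_lt (by omega : i < 2*n+1), Fin.val_succ]
  show i = i - 1 + 1
  omega

lemma stepI_extP_zero (hn : 1 ≤ n) (w' : Equiv.Perm (Fin (2*n))) :
    stepI (extP w') 0 = 1 := by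
  unfold stepI
  rw [Nat.cast_zero, extP_zero, cast_eq_succ (le_refl 1) (by omega), extP_succ]
  rw [if_neg]
  exact Fin.not_lt_zero _

lemma stepI_extP_mid (w' : Equiv.Perm (Fin (2*n))) {j : ℕ} (h : j + 2 ≤ 2*n) :
    stepI (extP w') (j+1)
      = if w' ⟨j+1, by omega⟩ < w' ⟨j, by omega⟩ then -1 else 1 := by
  unfold stepI
  rw [cast_eq_succ (by omega : 1 ≤ j+1+1) (by omega), cast_eq_succ (by omega : 1 ≤ j+1) (by omega),
    extP_succ, extP_succ]
  simp only [Fin.succ_lt_succ_iff]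
  congr

lemma stepI_extP_last (hn : 1 ≤ n) (w' : Equiv.Perm (Fin (2*n))) :
    stepI (extP w') (2*n) = -1 := by
  unfold stepI
  rw [show ((2*n+1 : ℕ) : Fin (2*n+1)) = 0 from Fin.natCast_self _,
    extP_zero, cast_eq_succ (by omega : 1 ≤ 2*n) (le_refl _), extP_succ]
  rw [if_pos (Fin.succ_pos _)]

lemma TI_extP_total (hn : 1 ≤ n) (w' : Equiv.Perm (Fin (2*n))) :
    TI (extP w') (2*n+1) = 2*n - 1 - 2 * (descents w' : ℤ) := by
  have hsplit : TI (extP w') (2*n+1)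
      = (∑ j ∈ Finset.range (2*n-1), stepI (extP w') (j+1))
        + stepI (extP w') 0 + stepI (extP w') (2*n) := by
    rw [TI, show 2*n+1 = ((2*n-1)+1)+1 by omega, Finset.sum_range_succ,
      Finset.sum_range_succ', show (2*n-1)+1 = 2*n by omega]
  rw [hsplit, stepI_extP_zero hn, stepI_extP_last hn,
    sum_pm (fun j => stepI (extP w') (j+1)) (fun j => stepI_pm _ _)]
  have hcard : ((Finset.range (2*n-1)).filter (fun j => stepI (extP w') (j+1) = -1)).card
      = descents w' := by
    rw [descents, descentsIn]
    congr 1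
    apply Finset.filter_congr
    intro j hj
    have hj' : j < 2*n-1 := Finset.mem_range.mp hj
    rw [stepI_extP_mid w' (by omega)]
    constructor
    · intro hif
      refine ⟨by omega, ?_⟩
      by_contra hc
      rw [if_neg hc] at hif
      norm_num at hif
    · rintro ⟨h, hlt⟩
      rw [if_pos hlt]
  rw [hcard]
  omega

noncomputable def psiP (w : Equiv.Perm (Fin (2*n+1))) : Equiv.Perm (Fin (2*n)) :=
  (Equiv.Perm.decomposeFin ((Equiv.addRight (w.symm 0)).trans w)).2


lemma ext_decompose (u : Equiv.Perm (Fin (2*n+1))) (hu : u 0 = 0) :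
    extP (Equiv.Perm.decomposeFin u).2 = u := by
  have h1 : Equiv.Perm.decomposeFin.symm (Equiv.Perm.decomposeFin u) = u :=
    Equiv.symm_apply_apply _ _
  have h2 : (Equiv.Perm.decomposeFin u).1 = 0 := by
    have h3 := Equiv.Perm.decomposeFin_symm_apply_zero
      (Equiv.Perm.decomposeFin u).1 (Equiv.Perm.decomposeFin u).2
    rw [show ((Equiv.Perm.decomposeFin u).1, (Equiv.Perm.decomposeFin u).2)
        = Equiv.Perm.decomposeFin u from rfl, h1, hu] at h3
    exact h3.symm
  rw [extP, ← h2]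
  rw [show ((Equiv.Perm.decomposeFin u).1, (Equiv.Perm.decomposeFin u).2)
      = Equiv.Perm.decomposeFin u from rfl, h1]

lemma recompose (w : Equiv.Perm (Fin (2*n+1))) :
    rotP (-(w.symm 0)) (extP (psiP w)) = w := by
  have hu : ((Equiv.addRight (w.symm 0)).trans w) 0 = 0 := by
    simp only [Equiv.trans_apply, Equiv.coe_addRight, zero_add, Equiv.apply_symm_apply]
  rw [psiP, ext_decompose _ hu]
  ext j
  simp only [rotP_apply, Equiv.trans_apply, Equiv.coe_addRight, neg_add_cancel_right]

lemma psi_rot (k : Fin (2*n+1)) (w' : Equiv.Perm (Fin (2*n))) :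
    psiP (rotP k (extP w')) = w' := by
  have hsymm : (rotP k (extP w')).symm 0 = -k := by
    rw [Equiv.symm_apply_eq, rotP_apply, neg_add_cancel]
    exact (Equiv.Perm.decomposeFin_symm_apply_zero 0 w').symm
  have htr : (Equiv.addRight ((rotP k (extP w')).symm 0)).trans (rotP k (extP w'))
      = extP w' := by
    rw [hsymm]
    ext j
    simp only [Equiv.trans_apply, Equiv.coe_addRight, rotP_apply, neg_add_cancel_right]
  rw [psiP, htr, extP, Equiv.apply_symm_apply]


lemma dyck_imp_good (hn : 1 ≤ n) (k : Fin (2*n+1)) (w' : Equiv.Perm (Fin (2*n)))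
    (h : IsDyckPerm n (rotP k (extP w'))) :
    descents w' = n - 1 ∨ descents w' = n := by
  have hc : CondC n (TI (extP w')) k.val := (isDyck_iff_cond (extP w') k).mp h
  have heps := cond_eps (TI_step (extP w')) (TI_per (extP w')) hc
  rw [TI_extP_total hn w'] at heps
  omega

lemma good_exists_unique (hn : 1 ≤ n) (w' : Equiv.Perm (Fin (2*n)))
    (h : descents w' = n - 1 ∨ descents w' = n) :
    ∃! k : Fin (2*n+1), IsDyckPerm n (rotP k (extP w')) := by
  have hε : TI (extP w') (2*n+1) = 1 ∨ TI (extP w') (2*n+1) = -1 := by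
    rw [TI_extP_total hn w']
    omega
  obtain ⟨k₀, hk₀⟩ := cond_exists hn (TI_step (extP w')) (TI_per (extP w')) hε
  refine ⟨⟨k₀, hk₀.1⟩, ?_, ?_⟩
  · exact (isDyck_iff_cond (extP w') _).mpr hk₀
  · intro y hy
    have hcy : CondC n (TI (extP w')) y.val := (isDyck_iff_cond (extP w') y).mp hy
    ext
    show y.val = k₀
    rcases lt_trichotomy y.val k₀ with hlt | heq | hgt
    · exact absurd (cond_uniq (TI_step (extP w')) (TI_per (extP w')) hcy hk₀ hlt) not_false
    · exact heq
    · exact absurd (cond_uniq (TI_step (extP w')) (TI_per (extP w')) hk₀ hcy hgt) not_false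


end Perms

/-- The number of permutations of `[2n+1]` with exactly `n` descents whose
lattice path is a Dyck path equals the number of permutations of `[2n]` with
`n-1` or `n` descents, which is `A(n-1,2n) + A(n,2n)` (the bijection cycles
the permutation until `2n+1` is last and deletes it). -/
theorem card_dyckPerm_eq_card_perms (n : ℕ) (hn : 1 ≤ n) :
    (Finset.univ.filter (fun w : Equiv.Perm (Fin (2 * n + 1)) => IsDyckPerm n w)).card
        = (Finset.univ.filter (fun w' : Equiv.Perm (Fin (2 * n)) =>
            descents w' = n - 1 ∨ descents w' = n)).card ∧
    (Finset.univ.filter (fun w' : Equiv.Perm (Fin (2 * n)) =>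
        descents w' = n - 1 ∨ descents w' = n)).card
      = eulerian (n - 1) (2 * n) + eulerian n (2 * n) := by
  constructor
  · apply Finset.card_bij (fun w _ => psiP w)
    · intro w hw
      rw [Finset.mem_filter] at hw ⊢
      refine ⟨Finset.mem_univ _, ?_⟩
      have hd : IsDyckPerm n (rotP (-(w.symm 0)) (extP (psiP w))) := by
        rw [recompose w]; exact hw.2
      exact dyck_imp_good hn _ _ hd
    · intro w1 h1 w2 h2 heq
      rw [Finset.mem_filter] at h1 h2
      have e1 := recompose w1
      have e2 := recompose w2
      have hd1 : IsDyckPerm n (rotP (-(w1.symm 0)) (extP (psiP w1))) := by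
        rw [e1]; exact h1.2
      have hd2 : IsDyckPerm n (rotP (-(w2.symm 0)) (extP (psiP w2))) := by
        rw [e2]; exact h2.2
      rw [heq] at hd1 e1
      obtain ⟨k, -, huniq⟩ := good_exists_unique hn (psiP w2) (dyck_imp_good hn _ _ hd2)
      have hk1 := huniq _ hd1
      have hk2 := huniq _ hd2
      rw [hk1] at e1
      rw [hk2] at e2
      exact e1.symm.trans e2
    · intro w' hw'
      rw [Finset.mem_filter] at hw'
      obtain ⟨k, hk, -⟩ := good_exists_unique hn w' hw'.2
      exact ⟨rotP k (extP w'), Finset.mem_filter.mpr ⟨Finset.mem_univ _, hk⟩, psi_rot k w'⟩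
  · rw [eulerian, eulerian, Finset.filter_or]
    apply Finset.card_union_of_disjoint
    rw [Finset.disjoint_left]
    intro w hw1 hw2
    rw [Finset.mem_filter] at hw1 hw2
    omega
end
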